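/- Every δ-reversible ring R is δ-linear Armendariz: if a₀, a₁, b₀, b₁ ∈ R and the polynomials f(x) = a₀ + a₁x and g(x) = b₀ + b₁x in R[x] satisfy f(x)g(x) = 0, then aᵢbⱼ ∈ δ(R) for all 0 ≤ i, j ≤ 1. -/
import Mathlib

/-- A right ideal `I` of `R` (a submodule of `R` as a right `R`-module, i.e. an
`Rᵐᵒᵖ`-submodule) is essential if every right ideal meeting it trivially is trivial. -/
def IsEssentialRightIdeal (R : Type*) [Ring R] (I : Submodule Rᵐᵒᵖ R) : Prop :=
  ∀ K : Submodule Rᵐᵒᵖ R, K ⊓ I = ⊥ → K = ⊥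

/-- The Zhou radical `δ(R)`: the intersection of all essential maximal right ideals of `R`
(the whole ring if there are no essential maximal right ideals). -/
def zhouRadical (R : Type*) [Ring R] : Set R :=
  ⋂₀ { S : Set R | ∃ I : Submodule Rᵐᵒᵖ R, IsCoatom I ∧ IsEssentialRightIdeal R I ∧ S = ↑I }

/-- A ring `R` is `δ`-reversible if `a * b = 0` implies `b * a ∈ δ(R)`. -/
def IsDeltaReversible (R : Type*) [Ring R] : Prop :=
  ∀ a b : R, a * b = 0 → b * a ∈ zhouRadical R

lemma mem_zhouRadical_iff {R : Type*} [Ring R] {x : R} :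
    x ∈ zhouRadical R ↔
      ∀ I : Submodule Rᵐᵒᵖ R, IsCoatom I → IsEssentialRightIdeal R I → x ∈ I := by
  constructor
  · intro h I hc he
    exact h (I : Set R) ⟨I, hc, he, rfl⟩
  · rintro h S ⟨I, hc, he, rfl⟩
    exact h I hc he

lemma zero_mem_zhouRadical {R : Type*} [Ring R] : (0 : R) ∈ zhouRadical R :=
  mem_zhouRadical_iff.2 fun I _ _ => I.zero_mem

lemma neg_mem_zhouRadical {R : Type*} [Ring R] {x : R} (hx : x ∈ zhouRadical R) :
    -x ∈ zhouRadical R :=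
  mem_zhouRadical_iff.2 fun I hc he => I.neg_mem (mem_zhouRadical_iff.1 hx I hc he)

lemma mul_right_mem_zhouRadical {R : Type*} [Ring R] {x : R} (hx : x ∈ zhouRadical R) (a : R) :
    x * a ∈ zhouRadical R :=
  mem_zhouRadical_iff.2 fun I hc he =>
    I.smul_mem (MulOpposite.op a) (mem_zhouRadical_iff.1 hx I hc he)

/-- left multiplication as an `Rᵐᵒᵖ`-linear map -/
def lmulOp {R : Type*} [Ring R] (a : R) : R →ₗ[Rᵐᵒᵖ] R where
  toFun x := a * x
  map_add' := mul_add a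
  map_smul' c x := (mul_assoc a x c.unop).symm

/-- If `y ∉ I` and `I` is a maximal right ideal, then `I ⊔ yR = R`. -/
lemma sup_span_eq_top {R : Type*} [Ring R] {I : Submodule Rᵐᵒᵖ R} (hc : IsCoatom I)
    {y : R} (hy : y ∉ I) : I ⊔ Submodule.span Rᵐᵒᵖ {y} = ⊤ := by
  apply hc.2
  refine lt_of_le_of_ne le_sup_left fun hEq => hy ?_
  rw [hEq]
  exact Submodule.mem_sup_right (Submodule.mem_span_singleton_self y)

/-- If `x R x ⊆ I` for a maximal right ideal `I`, then `x ∈ I`. -/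
lemma mem_of_forall_mul_mem {R : Type*} [Ring R] {I : Submodule Rᵐᵒᵖ R} (hc : IsCoatom I)
    {x : R} (h : ∀ r : R, x * r * x ∈ I) : x ∈ I := by
  by_cases hx : x ∈ I
  · exact hx
  · have htop := sup_span_eq_top hc hx
    have h1 : (1 : R) ∈ I ⊔ Submodule.span Rᵐᵒᵖ {x} := htop ▸ Submodule.mem_top
    obtain ⟨m, hm, z, hz, hmz⟩ := Submodule.mem_sup.1 h1
    obtain ⟨c, rfl⟩ := Submodule.mem_span_singleton.1 hz
    have hxeq : x = m * x + x * c.unop * x := by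
      have h2 : (m + c • x) * x = x := by rw [hmz, one_mul]
      have h3 : c • x = x * c.unop := rfl
      rw [h3, add_mul] at h2
      exact h2.symm
    rw [hxeq]
    exact I.add_mem (I.smul_mem (MulOpposite.op x) hm) (h c.unop)

/-- `δ(R)` is a left ideal. -/
lemma mul_left_mem_zhouRadical {R : Type*} [Ring R] {x : R} (hx : x ∈ zhouRadical R) (a : R) :
    a * x ∈ zhouRadical R := by
  rw [mem_zhouRadical_iff] at hx ⊢
  intro I hc he
  set K : Submodule Rᵐᵒᵖ R := I.comap (lmulOp a) with hKdef
  have hmemK : ∀ y : R, y ∈ K ↔ a * y ∈ I := fun y => Iff.rfl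
  by_cases hK : K = ⊤
  · exact (hmemK x).1 (hK ▸ Submodule.mem_top)
  · -- K is a maximal right ideal
    have hcK : IsCoatom K := by
      refine ⟨hK, fun J hJ => ?_⟩
      obtain ⟨j, hjJ, hjK⟩ := SetLike.exists_of_lt hJ
      have hajI : a * j ∉ I := fun hmem => hjK ((hmemK j).2 hmem)
      have htop := sup_span_eq_top hc hajI
      rw [eq_top_iff]
      intro t _
      have hat : a * t ∈ I ⊔ Submodule.span Rᵐᵒᵖ {a * j} := htop ▸ Submodule.mem_top
      obtain ⟨m, hm, z, hz, hmz⟩ := Submodule.mem_sup.1 hat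
      obtain ⟨c, rfl⟩ := Submodule.mem_span_singleton.1 hz
      have hc2 : c • (a * j) = a * (j * c.unop) := by
        show (a * j) * c.unop = _; rw [mul_assoc]
      have hsub : t - j * c.unop ∈ K := by
        rw [hmemK, mul_sub, ← mul_assoc]
        have : a * t - a * j * c.unop = m := by
          rw [← hmz, hc2, ← mul_assoc, add_sub_cancel_right]
        rw [this]; exact hm
      have h1 : t - j * c.unop ∈ J := le_of_lt hJ hsub
      have h2 : j * c.unop ∈ J := J.smul_mem c hjJ
      have := J.add_mem h1 h2
      simpa using this
    -- K is essential
    have heK : IsEssentialRightIdeal R K := by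
      intro J hJK
      rw [eq_bot_iff]
      intro j hjJ
      rw [Submodule.mem_bot]
      by_cases haj : a * j ∈ I
      · have : j ∈ J ⊓ K := ⟨hjJ, (hmemK j).2 haj⟩
        rw [hJK] at this
        exact this
      · exfalso
        have hajne : a * j ≠ 0 := fun h0 => haj (h0 ▸ I.zero_mem)
        have hspan : Submodule.span Rᵐᵒᵖ {a * j} ⊓ I ≠ ⊥ := by
          intro hbot
          have := he _ hbot
          have : a * j ∈ (⊥ : Submodule Rᵐᵒᵖ R) :=
            this ▸ Submodule.mem_span_singleton_self (a * j)
          exact hajne (Submodule.mem_bot _ |>.1 this)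
        obtain ⟨y, ⟨hy1, hy2⟩, hyne⟩ := Submodule.ne_bot_iff _ |>.1 hspan
        obtain ⟨c, rfl⟩ := Submodule.mem_span_singleton.1 hy1
        have hc2 : c • (a * j) = a * (j * c.unop) := by
          show (a * j) * c.unop = _; rw [mul_assoc]
        have hjc : j * c.unop ∈ K := (hmemK _).2 (hc2 ▸ hy2)
        have hjcJ : j * c.unop ∈ J := J.smul_mem c hjJ
        have : j * c.unop ∈ J ⊓ K := ⟨hjcJ, hjc⟩
        rw [hJK, Submodule.mem_bot] at this
        apply hyne
        rw [hc2, this, mul_zero]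
    exact (hmemK x).1 (hx K hcK heK)

open Polynomial in
/-- Every δ-reversible ring is δ-linear Armendariz. -/
theorem deltaLinearArmendariz_of_deltaReversible (R : Type*) [Ring R]
    (hrev : IsDeltaReversible R) (a₀ a₁ b₀ b₁ : R)
    (h : (C a₀ + C a₁ * X) * (C b₀ + C b₁ * X) = (0 : R[X])) :
    a₀ * b₀ ∈ zhouRadical R ∧ a₀ * b₁ ∈ zhouRadical R ∧
      a₁ * b₀ ∈ zhouRadical R ∧ a₁ * b₁ ∈ zhouRadical R := by
  have e0 : a₀ * b₀ = 0 := by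
    have := congrArg (fun p => Polynomial.coeff p 0) h
    simpa [mul_add, add_mul, mul_assoc, coeff_C_mul, coeff_X_mul] using this
  have e1 : a₁ * b₀ + a₀ * b₁ = 0 := by
    have := congrArg (fun p => Polynomial.coeff p 1) h
    simpa [mul_add, add_mul, mul_assoc, coeff_C_mul, coeff_X_mul] using this
  have e2 : a₁ * b₁ = 0 := by
    have := congrArg (fun p => Polynomial.coeff p 2) h
    simpa [mul_add, add_mul, mul_assoc, coeff_C_mul, coeff_X_mul] using this
  have hn : a₁ * b₀ = -(a₀ * b₁) := eq_neg_of_add_eq_zero_left e1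
  have key : a₁ * b₀ ∈ zhouRadical R := by
    rw [mem_zhouRadical_iff]
    intro I hc he
    apply mem_of_forall_mul_mem hc
    intro r
    have h1 : b₀ * (r * a₀) ∈ zhouRadical R :=
      hrev (r * a₀) b₀ (by rw [mul_assoc, e0, mul_zero])
    have h2 : a₁ * (b₀ * (r * a₀)) * b₁ ∈ zhouRadical R :=
      mul_right_mem_zhouRadical (mul_left_mem_zhouRadical h1 a₁) b₁
    have heq : a₁ * b₀ * r * (a₁ * b₀) = -(a₁ * (b₀ * (r * a₀)) * b₁) := by
      nth_rewrite 2 [hn]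
      noncomm_ring
    rw [heq]
    exact I.neg_mem (mem_zhouRadical_iff.1 h2 I hc he)
  refine ⟨e0 ▸ zero_mem_zhouRadical, ?_, key, e2 ▸ zero_mem_zhouRadical⟩
  have : a₀ * b₁ = -(a₁ * b₀) := eq_neg_of_add_eq_zero_right e1
  rw [this]
  exact neg_mem_zhouRadical key
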